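/- arXiv:1108.1267 — 8 statements merged into one kernel-verified Lean document; each statement's English description precedes it below -/
import Mathlib

section
/- Let a and d be coprime integers and let n be a positive integer with n ≤ 16. Then the arithmetic progression a, a+d, ..., a+(n−1)d contains a term that is relatively prime to every other term; that is, there exists an index k with 0 ≤ k ≤ n−1 such that gcd(a+kd, a+jd) = 1 for all j with 0 ≤ j ≤ n−1 and j ≠ k. -/
/-- Bitmask of indices `k < m` that are "forbidden" for prime `p` with residue `r`
in a progression of length `n`: those with `k ≡ r [MOD p]` and `p ≤ max k (n-1-k)`. -/
def pillaiMask (n p r : ℕ) : ℕ → ℕ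
  | 0 => 0
  | k + 1 => (if k % p = r ∧ p ≤ max k (n - 1 - k) then 2 ^ k else 0) ||| pillaiMask n p r k

/-- Loop over all choices of one mask from each list, checking the union is not everything. -/
def pillaiLoop (n : ℕ) : ℕ → List (List ℕ) → Bool
  | acc, [] => acc != 2 ^ n - 1
  | acc, ms :: rest => ms.all fun m => pillaiLoop n (acc ||| m) rest

def pillaiMasks (n : ℕ) : List (List ℕ) :=
  ((List.range n).filter Nat.Prime).map fun p => (List.range p).map fun r => pillaiMask n p r n

lemma pillaiMask_testBit (n p r : ℕ) : ∀ m k, (pillaiMask n p r m).testBit k = true ↔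
    k < m ∧ k % p = r ∧ p ≤ max k (n - 1 - k) := by
  intro m
  induction m with
  | zero => intro k; simp [pillaiMask, Nat.zero_testBit]
  | succ m ih =>
    intro k
    rw [pillaiMask, Nat.testBit_or, Bool.or_eq_true, ih]
    constructor
    · rintro (h | ⟨h1, h2⟩)
      · split at h
        · next hc =>
          have hk : m = k := by
            by_contra hne
            rw [Nat.testBit_two_pow_of_ne hne] at h
            exact Bool.false_ne_true h
          exact ⟨by omega, hk ▸ hc⟩
        · simp at h
      · exact ⟨by omega, h2⟩
    · rintro ⟨hk, h2⟩
      rcases Nat.lt_succ_iff_lt_or_eq.mp hk with h | rfl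
      · exact Or.inr ⟨h, h2⟩
      · left
        rw [if_pos h2]
        exact Nat.testBit_two_pow_self
  
lemma pillaiMask_lt (n p r : ℕ) : ∀ m, pillaiMask n p r m < 2 ^ m := by
  intro m
  induction m with
  | zero => simp [pillaiMask]
  | succ m ih =>
    rw [pillaiMask]
    apply Nat.or_lt_two_pow
    · split
      · exact Nat.pow_lt_pow_succ one_lt_two
      · positivity
    · exact lt_trans ih (Nat.pow_lt_pow_succ one_lt_two)

lemma exists_unset_bit {n acc : ℕ} (hlt : acc < 2 ^ n) (hne : acc ≠ 2 ^ n - 1) :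
    ∃ k < n, acc.testBit k = false := by
  by_contra hcon
  push_neg at hcon
  apply hne
  apply Nat.eq_of_testBit_eq
  intro i
  rw [Nat.testBit_two_pow_sub_one]
  by_cases hi : i < n
  · simpa [hi] using (hcon i hi)
  · simp only [hi, decide_false]
    exact Nat.testBit_lt_two_pow (lt_of_lt_of_le hlt (Nat.pow_le_pow_right (by norm_num) (by omega)))

lemma pillaiLoop_spec (n : ℕ) : ∀ (L : List (List ℕ)) (sel : List ℕ) (acc : ℕ),
    acc < 2 ^ n → List.Forall₂ (fun m ms => m ∈ ms ∧ m < 2 ^ n) sel L →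
    pillaiLoop n acc L = true →
    ∃ k < n, acc.testBit k = false ∧ ∀ m ∈ sel, m.testBit k = false := by
  intro L
  induction L with
  | nil =>
    intro sel acc hacc hsel hloop
    rw [List.forall₂_nil_right_iff] at hsel
    subst hsel
    simp only [pillaiLoop, bne_iff_ne, ne_eq] at hloop
    obtain ⟨k, hk, hbit⟩ := exists_unset_bit hacc hloop
    exact ⟨k, hk, hbit, fun m hm => absurd hm List.not_mem_nil⟩
  | cons ms rest ih =>
    intro sel acc hacc hsel hloop
    obtain ⟨m, sel', ⟨hmem, hmlt⟩, hsel', rfl⟩ := List.forall₂_cons_right_iff.mp hsel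
    simp only [pillaiLoop, List.all_eq_true] at hloop
    have hloop' := hloop m hmem
    obtain ⟨k, hk, hbit, hbits⟩ := ih sel' (acc ||| m) (Nat.or_lt_two_pow hacc hmlt) hsel' hloop'
    rw [Nat.testBit_or, Bool.or_eq_false_iff] at hbit
    refine ⟨k, hk, hbit.1, fun m' hm' => ?_⟩
    rcases List.mem_cons.mp hm' with rfl | hm'
    · exact hbit.2
    · exact hbits m' hm'

set_option maxHeartbeats 1000000 in
lemma pillaiLoop_true : ∀ n < 17, 0 < n → pillaiLoop n 0 (pillaiMasks n) = true := by decide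

/-- The forbidden residue of `k` mod `p` making `p ∣ a + k*d`, when `p ∤ d`. -/
def pillaiResid (a d : ℤ) (p : ℕ) : ℕ :=
  (((-a : ℤ) : ZMod p) * ((d : ℤ) : ZMod p)⁻¹).val

lemma pillaiResid_lt {p : ℕ} (hp : p ≠ 0) (a d : ℤ) : pillaiResid a d p < p := by
  haveI : NeZero p := ⟨hp⟩
  exact ZMod.val_lt _

lemma pillaiResid_spec {p : ℕ} (hp : p.Prime) {a d : ℤ} (hd : ¬(p : ℤ) ∣ d) {k : ℕ}
    (h : (p : ℤ) ∣ a + (k : ℤ) * d) : k % p = pillaiResid a d p := by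
  haveI : Fact p.Prime := ⟨hp⟩
  have h0 : ((a + (k : ℤ) * d : ℤ) : ZMod p) = 0 :=
    (ZMod.intCast_zmod_eq_zero_iff_dvd _ _).mpr h
  push_cast at h0
  have hdz : ((d : ℤ) : ZMod p) ≠ 0 := fun hz =>
    hd ((ZMod.intCast_zmod_eq_zero_iff_dvd _ _).mp hz)
  have hk : ((k : ℕ) : ZMod p) = ((-a : ℤ) : ZMod p) * ((d : ℤ) : ZMod p)⁻¹ := by
    rw [eq_mul_inv_iff_mul_eq₀ hdz]
    push_cast
    linear_combination h0
  calc k % p = ((k : ℕ) : ZMod p).val := (ZMod.val_natCast p k).symm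
    _ = pillaiResid a d p := by rw [hk]; rfl

/-- **Generalized Pillai Theorem.** If `a` and `d` are coprime integers and `n` is a
positive integer at most 16, then the arithmetic progression `a, a+d, ..., a+(n-1)d`
contains a term relatively prime to all the others. -/
theorem generalized_pillai (a d : ℤ) (had : Int.gcd a d = 1)
    (n : ℕ) (hn : 0 < n) (hn16 : n ≤ 16) :
    ∃ k < n, ∀ j < n, j ≠ k → Int.gcd (a + (k : ℤ) * d) (a + (j : ℤ) * d) = 1 := by
  rcases eq_or_ne d 0 with rfl | hd
  · refine ⟨0, hn, fun j _ _ => ?_⟩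
    simpa using had
  have hloop := pillaiLoop_true n (by omega) hn
  set ps : List ℕ := (List.range n).filter Nat.Prime with hps
  set sel : List ℕ := ps.map (fun p => pillaiMask n p (pillaiResid a d p) n) with hsel
  have hforall : List.Forall₂ (fun m ms => m ∈ ms ∧ m < 2 ^ n) sel (pillaiMasks n) := by
    rw [hsel, pillaiMasks, ← hps, List.forall₂_map_right_iff, List.forall₂_map_left_iff,
      List.forall₂_same]
    intro p hp
    simp only [hps, List.mem_filter, List.mem_range, decide_eq_true_eq] at hp
    constructor
    · exact List.mem_map.mpr ⟨pillaiResid a d p, List.mem_range.mpr (pillaiResid_lt hp.2.ne_zero a d), rfl⟩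
    · exact pillaiMask_lt n p _ n
  obtain ⟨k, hk, -, hbits⟩ := pillaiLoop_spec n (pillaiMasks n) sel 0
    (Nat.two_pow_pos n) hforall hloop
  refine ⟨k, hk, fun j hj hjk => ?_⟩
  by_contra hgcd
  have hg0 : Int.gcd (a + (k : ℤ) * d) (a + (j : ℤ) * d) ≠ 0 := by
    intro h0
    rw [Int.gcd_eq_zero_iff] at h0
    obtain ⟨h1, h2⟩ := h0
    have hjd : ((j : ℤ) - k) * d = 0 := by ring_nf; linarith
    rcases mul_eq_zero.mp hjd with h | h
    · have : (j : ℤ) = k := by linarith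
      exact hjk (by exact_mod_cast this)
    · exact hd h
  obtain ⟨p, hp, hpg⟩ := Nat.exists_prime_and_dvd hgcd
  have hpk : (p : ℤ) ∣ a + (k : ℤ) * d :=
    dvd_trans (Int.natCast_dvd_natCast.mpr hpg) (Int.gcd_dvd_left _ _)
  have hpj : (p : ℤ) ∣ a + (j : ℤ) * d :=
    dvd_trans (Int.natCast_dvd_natCast.mpr hpg) (Int.gcd_dvd_right _ _)
  have hpd : ¬(p : ℤ) ∣ d := by
    intro hdvd
    have hpa : (p : ℤ) ∣ a := by
      have := dvd_sub hpk (hdvd.mul_left (k : ℤ))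
      simpa using this
    have h1 : (p : ℤ) ∣ (Int.gcd a d : ℤ) := Int.dvd_coe_gcd hpa hdvd
    rw [had] at h1
    have := Int.le_of_dvd one_pos h1
    have := hp.two_le
    omega
  have hpjk : (p : ℤ) ∣ (j : ℤ) - k := by
    have hsub : (p : ℤ) ∣ ((j : ℤ) - k) * d := by
      have h2 := dvd_sub hpj hpk
      have heq : (a + (j : ℤ) * d) - (a + (k : ℤ) * d) = ((j : ℤ) - k) * d := by ring
      rwa [heq] at h2
    rcases (Nat.prime_iff_prime_int.mp hp).dvd_mul.mp hsub with h | h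
    · exact h
    · exact absurd h hpd
  have hpabs : p ∣ ((j : ℤ) - k).natAbs := by
    have := Int.natAbs_dvd_natAbs.mpr hpjk
    simpa using this
  have habs_pos : ((j : ℤ) - k).natAbs ≠ 0 := by
    intro h0
    have h1 : (j : ℤ) - k = 0 := Int.natAbs_eq_zero.mp h0
    have : (j : ℤ) = k := by linarith
    exact hjk (by exact_mod_cast this)
  have hple' : p ≤ ((j : ℤ) - k).natAbs := Nat.le_of_dvd (Nat.pos_of_ne_zero habs_pos) hpabs
  have hple : p ≤ max k (n - 1 - k) := by omega
  have hpn : p < n := by omega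
  have hres : k % p = pillaiResid a d p := pillaiResid_spec hp hpd hpk
  have hmem : pillaiMask n p (pillaiResid a d p) n ∈ sel := by
    rw [hsel]
    exact List.mem_map.mpr ⟨p, by simp [hps, List.mem_filter, List.mem_range, hpn, hp], rfl⟩
  have hbit := hbits _ hmem
  have := (pillaiMask_testBit n p (pillaiResid a d p) n k).mpr ⟨hk, hres, hple⟩
  rw [hbit] at this
  exact Bool.false_ne_true this
end

section
/- Let R be a σ-atomic GCD domain of characteristic 0, and let n be a positive integer with n ≤ 16 such that for every rational prime p with p ≤ n − 2, any two prime elements of R dividing p·1_R are associated. Then for any coprime a, d ∈ R, the arithmetic progression a, a+d, ..., a+(n−1)d contains a term that is relatively prime to all the others; that is, there exists an index k with 0 ≤ k ≤ n−1 such that gcd(a+kd, a+jd) is a unit for all j ≠ k with 0 ≤ j ≤ n−1. -/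
private def apGoodb (n k b2 b3 b5 b7 b11 b13 : ℕ) : Bool :=
  (!(2 ≤ n-2 && k % 2 == b2 && b2+2 < n)) &&
  (!(3 ≤ n-2 && k % 3 == b3 && b3+3 < n)) &&
  (!(5 ≤ n-2 && k % 5 == b5 && b5+5 < n)) &&
  (!(7 ≤ n-2 && k % 7 == b7 && b7+7 < n)) &&
  (!(11 ≤ n-2 && k % 11 == b11 && b11+11 < n)) &&
  (!(13 ≤ n-2 && k % 13 == b13 && b13+13 < n)) &&
  (!((n == 3 || n == 4 || n == 6 || n == 8 || n == 12 || n == 14) && (k == 0 || k == n-1)))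

private def apExb (f : ℕ → Bool) : ℕ → Bool
  | 0 => false
  | k+1 => f k || apExb f k

private def apAllb (f : ℕ → Bool) : ℕ → Bool
  | 0 => true
  | k+1 => f k && apAllb f k

private def apCheckn (n : ℕ) : Bool :=
  apAllb (fun b2 => apAllb (fun b3 => apAllb (fun b5 => apAllb (fun b7 =>
    apAllb (fun b11 => apAllb (fun b13 =>
      apExb (fun k => apGoodb n k b2 b3 b5 b7 b11 b13) n) 4) 6) 7) 5) 3) 2

private lemma apAllb_eq_true {f : ℕ → Bool} : ∀ m, apAllb f m = true → ∀ i, i < m → f i = true := by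
  intro m
  induction m with
  | zero => intro _ i hi; omega
  | succ m ih =>
    intro h i hi
    rw [apAllb, Bool.and_eq_true] at h
    rcases Nat.lt_succ_iff_lt_or_eq.mp hi with h' | rfl
    · exact ih h.2 i h'
    · exact h.1

private lemma apExb_eq_true {f : ℕ → Bool} : ∀ m, apExb f m = true → ∃ i, i < m ∧ f i = true := by
  intro m
  induction m with
  | zero => intro h; simp [apExb] at h
  | succ m ih =>
    intro h
    rw [apExb, Bool.or_eq_true] at h
    rcases h with h | h
    · exact ⟨m, Nat.lt_succ_self m, h⟩
    · obtain ⟨i, hi, hf⟩ := ih h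
      exact ⟨i, hi.trans (Nat.lt_succ_self m), hf⟩

set_option maxHeartbeats 12000000 in
private lemma apCheck_1 : apCheckn 1 = true := by decide
set_option maxHeartbeats 12000000 in
private lemma apCheck_2 : apCheckn 2 = true := by decide
set_option maxHeartbeats 12000000 in
private lemma apCheck_3 : apCheckn 3 = true := by decide
set_option maxHeartbeats 12000000 in
private lemma apCheck_4 : apCheckn 4 = true := by decide
set_option maxHeartbeats 12000000 in
private lemma apCheck_5 : apCheckn 5 = true := by decide
set_option maxHeartbeats 12000000 in
private lemma apCheck_6 : apCheckn 6 = true := by decide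
set_option maxHeartbeats 12000000 in
private lemma apCheck_7 : apCheckn 7 = true := by decide
set_option maxHeartbeats 12000000 in
private lemma apCheck_8 : apCheckn 8 = true := by decide
set_option maxHeartbeats 12000000 in
private lemma apCheck_9 : apCheckn 9 = true := by decide
set_option maxHeartbeats 12000000 in
private lemma apCheck_10 : apCheckn 10 = true := by decide
set_option maxHeartbeats 12000000 in
private lemma apCheck_11 : apCheckn 11 = true := by decide
set_option maxHeartbeats 12000000 in
private lemma apCheck_12 : apCheckn 12 = true := by decide
set_option maxHeartbeats 12000000 in
private lemma apCheck_13 : apCheckn 13 = true := by decide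
set_option maxHeartbeats 12000000 in
private lemma apCheck_14 : apCheckn 14 = true := by decide
set_option maxHeartbeats 12000000 in
private lemma apCheck_15 : apCheckn 15 = true := by decide
set_option maxHeartbeats 12000000 in
private lemma apCheck_16 : apCheckn 16 = true := by decide

private lemma apCheck (n : ℕ) (h1 : 0 < n) (h2 : n ≤ 16) : apCheckn n = true := by
  interval_cases n
  exacts [apCheck_1, apCheck_2, apCheck_3, apCheck_4, apCheck_5, apCheck_6, apCheck_7,
    apCheck_8, apCheck_9, apCheck_10, apCheck_11, apCheck_12, apCheck_13, apCheck_14,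
    apCheck_15, apCheck_16]

private lemma apPrimeFactor {R : Type*} [CommRing R] {q : R} (hq : Prime q) :
    ∀ m : ℕ, m ≠ 0 → q ∣ (m : R) → ∃ p : ℕ, p.Prime ∧ p ∣ m ∧ q ∣ (p : R) := by
  intro m
  induction m using Nat.strong_induction_on with
  | _ m ih =>
    intro hm hdvd
    rcases eq_or_ne m 1 with rfl | hm1
    · exact absurd (isUnit_of_dvd_unit (by simpa using hdvd) isUnit_one) hq.not_unit
    · have hp := Nat.minFac_prime hm1
      obtain ⟨c, hc⟩ := Nat.minFac_dvd m
      have hcast : (m : R) = (m.minFac : R) * (c : R) := by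
        nth_rewrite 1 [hc]; push_cast; ring
      rcases hq.dvd_mul.mp (hcast ▸ hdvd) with h1 | h2
      · exact ⟨m.minFac, hp, Nat.minFac_dvd m, h1⟩
      · have hc0 : c ≠ 0 := by rintro rfl; simp at hc; omega
        have hclt : c < m := by
          have h2le := hp.two_le
          rcases Nat.eq_zero_or_pos c with rfl | hcpos
          · omega
          · calc c < 2 * c := by omega
              _ ≤ m.minFac * c := by
                  apply Nat.mul_le_mul_right; omega
              _ = m := hc.symm
        obtain ⟨p, hp', hpd, hqd⟩ := ih c hclt hc0 h2
        exact ⟨p, hp', hpd.trans (Dvd.intro_left m.minFac hc.symm), hqd⟩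

private lemma apCoprimeFalse {R : Type*} [CommRing R] {q : R} (hq : Prime q) {p m : ℕ}
    (h : Nat.Coprime p m) (h1 : q ∣ (p : R)) (h2 : q ∣ (m : R)) : False := by
  have hz : IsCoprime (p : ℤ) (m : ℤ) := Nat.isCoprime_iff_coprime.mpr h
  have hc : IsCoprime ((p : ℤ) : R) ((m : ℤ) : R) := hz.map (Int.castRingHom R)
  push_cast at hc
  exact hq.not_unit (hc.isUnit_of_dvd' h1 h2)

/-- Arithmetic progressions in a σ-atomic GCD domain of characteristic zero:
if `n ≤ 16` and every rational prime `p ≤ n - 2` has at most one prime divisor in `R`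
up to associates (i.e. `n ≤ 1 + δ_R`), then any arithmetic progression of `n` terms
whose first term is coprime to the common difference contains a term relatively
prime to all the others. -/
theorem ap_gcd_domain_exists_coprime_term
    {R : Type*} [CommRing R] [IsDomain R] [GCDMonoid R] [CharZero R]
    (hσ : ∀ x : R, x ≠ 0 → ¬IsUnit x → ∃ q : R, Irreducible q ∧ q ∣ x)
    (n : ℕ) (hn : 0 < n) (hn16 : n ≤ 16)
    (hδ : ∀ p : ℕ, p.Prime → p ≤ n - 2 →
      ∀ P Q : R, Prime P → Prime Q → P ∣ (p : R) → Q ∣ (p : R) → Associated P Q)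
    (a d : R) (had : IsUnit (gcd a d)) :
    ∃ k < n, ∀ j < n, j ≠ k → IsUnit (gcd (a + (k : ℕ) • d) (a + (j : ℕ) • d)) := by
  classical
  -- a prime dividing a term cannot divide d
  have hqd : ∀ q : R, Prime q → ∀ j : ℕ, q ∣ a + j • d → ¬ q ∣ d := by
    intro q hq j hja hjd
    have hqa : q ∣ a := by
      have he : a = (a + j • d) - (j : R) * d := by rw [nsmul_eq_mul]; ring
      rw [he]
      exact dvd_sub hja (hjd.mul_left _)
    exact hq.not_unit (isUnit_of_dvd_unit (dvd_gcd hqa hjd) had)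
  -- a prime dividing two terms divides the cast of the index difference
  have hdvdsub : ∀ q : R, Prime q → ∀ u v : ℕ, u ≤ v → q ∣ a + u • d → q ∣ a + v • d →
      q ∣ ((v - u : ℕ) : R) := by
    intro q hq u v huv hu hv
    have hdiff : ((v - u : ℕ) : R) * d = (a + v • d) - (a + u • d) := by
      rw [Nat.cast_sub huv, nsmul_eq_mul, nsmul_eq_mul]; ring
    have hdd : q ∣ ((v - u : ℕ) : R) * d := by rw [hdiff]; exact dvd_sub hv hu
    rcases hq.dvd_mul.mp hdd with h | h
    · exact h
    · exact absurd h (hqd q hq u hu)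
  -- key conflict extraction
  have key : ∀ i l : ℕ, i < l → l < n → ¬ IsUnit (gcd (a + i • d) (a + l • d)) →
      ∃ p : ℕ, p.Prime ∧ p ∣ (l - i) ∧
        ∃ q : R, Prime q ∧ q ∣ (p : R) ∧ q ∣ (a + i • d) ∧ q ∣ (a + l • d) := by
    intro i l hil hln hgu
    have hg0 : gcd (a + i • d) (a + l • d) ≠ 0 := by
      intro h0
      rw [gcd_eq_zero_iff] at h0
      obtain ⟨h1, h2⟩ := h0
      have hd0 : ((l - i : ℕ) : R) * d = 0 := by
        have : ((l - i : ℕ) : R) * d = (a + l • d) - (a + i • d) := by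
          rw [Nat.cast_sub hil.le, nsmul_eq_mul, nsmul_eq_mul]; ring
        rw [this, h1, h2, sub_zero]
      have hli : ((l - i : ℕ) : R) ≠ 0 := by
        rw [Nat.cast_ne_zero]; omega
      have hd : d = 0 := by
        rcases mul_eq_zero.mp hd0 with h | h
        · exact absurd h hli
        · exact h
      have ha : a = 0 := by
        have := h1; rw [hd, smul_zero, add_zero] at this; exact this
      rw [ha, hd] at had
      have hz : gcd (0 : R) 0 = 0 := (gcd_eq_zero_iff 0 0).mpr ⟨rfl, rfl⟩
      rw [hz] at had
      exact not_isUnit_zero had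
    obtain ⟨q, hqirr, hqg⟩ := hσ _ hg0 hgu
    have hq : Prime q := hqirr.prime
    have hqi : q ∣ a + i • d := hqg.trans (gcd_dvd_left _ _)
    have hql : q ∣ a + l • d := hqg.trans (gcd_dvd_right _ _)
    have hqm : q ∣ ((l - i : ℕ) : R) := hdvdsub q hq i l hil.le hqi hql
    obtain ⟨p, hp, hpd, hqp⟩ := apPrimeFactor hq (l - i) (by omega) hqm
    exact ⟨p, hp, hpd, q, hq, hqp, hqi, hql⟩
  -- residue function
  let r : ℕ → ℕ := fun p =>
    if h : ∃ j, j < n ∧ ∃ q : R, Prime q ∧ q ∣ (p : R) ∧ q ∣ (a + j • d) then h.choose % p else 0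
  have hrlt : ∀ p, 0 < p → r p < p := by
    intro p hp
    show (if h : _ then _ else 0) < p
    split
    · exact Nat.mod_lt _ hp
    · exact hp
  have hres : ∀ p : ℕ, p.Prime → p ≤ n - 2 → ∀ q : R, Prime q → q ∣ (p : R) →
      ∀ j, j < n → q ∣ (a + j • d) → j % p = r p := by
    intro p hp hpn q hq hqp j hjn hqj
    have hex : ∃ j, j < n ∧ ∃ q : R, Prime q ∧ q ∣ (p : R) ∧ q ∣ (a + j • d) :=
      ⟨j, hjn, q, hq, hqp, hqj⟩
    have hreq : r p = hex.choose % p := dif_pos hex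
    obtain ⟨hj0n, q0, hq0, hq0p, hq0j⟩ := hex.choose_spec
    set j0 := hex.choose with hj0
    have hassoc : Associated q q0 := hδ p hp hpn q q0 hq hq0 hqp hq0p
    have hqj' : q0 ∣ a + j • d := (hassoc.dvd_iff_dvd_left).mp hqj
    have main : ∀ u v : ℕ, u ≤ v → q0 ∣ a + u • d → q0 ∣ a + v • d → u % p = v % p := by
      intro u v huv hu hv
      have hq0m : q0 ∣ ((v - u : ℕ) : R) := hdvdsub q0 hq0 u v huv hu hv
      by_contra hne
      have hnd : ¬ p ∣ (v - u) := fun hdd => hne ((Nat.modEq_iff_dvd' huv).mpr hdd)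
      exact apCoprimeFalse hq0 ((Nat.Prime.coprime_iff_not_dvd hp).mpr hnd) hq0p hq0m
    rw [hreq]
    rcases le_total j j0 with h | h
    · exact main j j0 h hqj' hq0j
    · exact (main j0 j h hq0j hqj').symm
  -- unpack the finite check
  have hch : apCheckn n = true := apCheck n hn hn16
  rw [apCheckn] at hch
  have h2 := apAllb_eq_true _ hch (r 2) (hrlt 2 (by norm_num))
  have h3 := apAllb_eq_true _ h2 (r 3) (hrlt 3 (by norm_num))
  have h5 := apAllb_eq_true _ h3 (r 5) (hrlt 5 (by norm_num))
  have h7 := apAllb_eq_true _ h5 (r 7) (hrlt 7 (by norm_num))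
  have h11 := apAllb_eq_true _ h7 (min (r 11) 5) (by omega)
  have h13 := apAllb_eq_true _ h11 (min (r 13) 3) (by omega)
  obtain ⟨k, hkn, hkg⟩ := apExb_eq_true _ h13
  simp only [apGoodb, Bool.and_eq_true, Bool.not_eq_true', Bool.and_eq_false_iff,
    Bool.or_eq_true, decide_eq_false_iff_not, decide_eq_true_eq, beq_iff_eq,
    beq_eq_false_iff_ne, ne_eq, Bool.or_eq_false_iff] at hkg
  obtain ⟨⟨⟨⟨⟨⟨hA2, hA3⟩, hA5⟩, hA7⟩, hA11⟩, hA13⟩, hE⟩ := hkg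
  refine ⟨k, hkn, ?_⟩
  intro j hjn hjk
  by_contra hgu
  -- symmetrize
  have hsymm : ∀ x y : R, IsUnit (gcd x y) → IsUnit (gcd y x) := by
    intro x y h
    exact isUnit_of_dvd_unit (dvd_gcd (gcd_dvd_right y x) (gcd_dvd_left y x)) h
  obtain ⟨i, l, hil, hln, hkil, hjil, hgu'⟩ :
      ∃ i l : ℕ, i < l ∧ l < n ∧ (k = i ∨ k = l) ∧ (j = i ∨ j = l) ∧
        ¬ IsUnit (gcd (a + i • d) (a + l • d)) := by
    rcases lt_or_gt_of_ne hjk with h | h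
    · exact ⟨j, k, h, hkn, Or.inr rfl, Or.inl rfl, fun hu => hgu (hsymm _ _ hu)⟩
    · exact ⟨k, j, h, hjn, Or.inl rfl, Or.inr rfl, hgu⟩
  obtain ⟨p, hp, hpd, q, hq, hqp, hqi, hql⟩ := key i l hil hln hgu'
  have hple : p ≤ l - i := Nat.le_of_dvd (by omega) hpd
  rcases le_or_gt p (n - 2) with hpn | hpn
  · -- small prime case
    have hkq : q ∣ a + k • d := by rcases hkil with rfl | rfl; exacts [hqi, hql]
    have hjq : q ∣ a + j • d := by rcases hjil with rfl | rfl; exacts [hqi, hql]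
    have hkr : k % p = r p := hres p hp hpn q hq hqp k hkn hkq
    have hjr : j % p = r p := hres p hp hpn q hq hqp j hjn hjq
    -- the class has two elements: r p + p < n
    have hbig : r p + p < n := by
      rcases le_total j k with h | h
      · have hjk' : j < k := lt_of_le_of_ne h hjk
        have hmod : j % p = k % p := by rw [hjr, hkr]
        have hdvd : p ∣ k - j := (Nat.modEq_iff_dvd' h).mp hmod
        have h1 : p ≤ k - j := Nat.le_of_dvd (by omega) hdvd
        have h2 : j % p ≤ j := Nat.mod_le _ _
        omega
      · have hkj' : k < j := lt_of_le_of_ne h (Ne.symm hjk)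
        have hmod : k % p = j % p := by rw [hjr, hkr]
        have hdvd : p ∣ j - k := (Nat.modEq_iff_dvd' h).mp hmod
        have h1 : p ≤ j - k := Nat.le_of_dvd (by omega) hdvd
        have h2 : k % p ≤ k := Nat.mod_le _ _
        omega
    have hp14 : p ≤ 14 := by omega
    have hp2 : 2 ≤ p := hp.two_le
    interval_cases p
    · rcases hA2 with (h | h) | h
      exacts [h hpn, h hkr, h hbig]
    · rcases hA3 with (h | h) | h
      exacts [h hpn, h hkr, h hbig]
    · exact absurd hp (by norm_num)
    · rcases hA5 with (h | h) | h
      exacts [h hpn, h hkr, h hbig]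
    · exact absurd hp (by norm_num)
    · rcases hA7 with (h | h) | h
      exacts [h hpn, h hkr, h hbig]
    · exact absurd hp (by norm_num)
    · exact absurd hp (by norm_num)
    · exact absurd hp (by norm_num)
    · have hmin : min (r 11) 5 = r 11 := by omega
      rw [hmin] at hA11
      rcases hA11 with (h | h) | h
      exacts [h hpn, h hkr, h hbig]
    · exact absurd hp (by norm_num)
    · have hmin : min (r 13) 3 = r 13 := by omega
      rw [hmin] at hA13
      rcases hA13 with (h | h) | h
      exacts [h hpn, h hkr, h hbig]
    · exact absurd hp (by norm_num)
  · -- p = n - 1 : edge case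
    have hpl : p = n - 1 := by omega
    have hi0 : i = 0 ∧ l = n - 1 := by omega
    have hnmem : n = 3 ∨ n = 4 ∨ n = 6 ∨ n = 8 ∨ n = 12 ∨ n = 14 := by
      have hpp : (n - 1).Prime := hpl ▸ hp
      interval_cases n <;> first | (left; rfl) | (right; left; rfl) |
        (right; right; left; rfl) | (right; right; right; left; rfl) |
        (right; right; right; right; left; rfl) |
        (right; right; right; right; right; rfl) | (exact absurd hpp (by norm_num))
    rcases hE with hE | hE
    · omega
    · rcases hkil with rfl | rfl <;> omega
end

section
/- Let k be an integer with 3 ≤ k ≤ 8. Suppose that for all coprime integers a, d with d odd, the arithmetic progression a, a+d, ..., a+(2k−2)d (with 2k−1 terms) contains a term relatively prime to all the others. Then for all coprime integers a, d with d odd, the arithmetic progression a, a+d, ..., a+(2k−1)d (with 2k terms) also contains a term relatively prime to all the others. -/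
/-- If the Generalized Pillai Theorem holds for progressions of `2k-1` terms with odd
common difference (`3 ≤ k ≤ 8`), then it holds for progressions of `2k` terms with odd
common difference. -/
theorem pillai_step_odd_diff (k : ℕ) (hk3 : 3 ≤ k) (hk8 : k ≤ 8)
    (H : ∀ a d : ℤ, Int.gcd a d = 1 → Odd d →
      ∃ i < 2 * k - 1, ∀ j < 2 * k - 1, j ≠ i →
        Int.gcd (a + (i : ℤ) * d) (a + (j : ℤ) * d) = 1) :
    ∀ a d : ℤ, Int.gcd a d = 1 → Odd d →
      ∃ i < 2 * k, ∀ j < 2 * k, j ≠ i →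
        Int.gcd (a + (i : ℤ) * d) (a + (j : ℤ) * d) = 1 := by
  intro a d hcop hd
  have hdne : ¬ Even d := Int.not_even_iff_odd.mpr hd
  -- the witness of the (2k-1)-term property is an odd term
  have hodd : ∀ (b : ℤ) (i : ℕ), i < 2 * k - 1 →
      (∀ j < 2 * k - 1, j ≠ i → Int.gcd (b + (i : ℤ) * d) (b + (j : ℤ) * d) = 1) →
      ¬ (2 : ℤ) ∣ (b + (i : ℤ) * d) := by
    intro b i hi hw h2
    by_cases hc : i + 2 < 2 * k - 1
    · have hg := hw (i + 2) hc (by omega)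
      have heq : b + ((i + 2 : ℕ) : ℤ) * d = (b + (i : ℤ) * d) + 2 * d := by push_cast; ring
      have h2' : (2 : ℤ) ∣ (b + ((i + 2 : ℕ) : ℤ) * d) := by
        rw [heq]; exact h2.add (dvd_mul_right 2 d)
      have := Int.dvd_gcd h2 h2'
      rw [hg] at this
      norm_num at this
    · have hi2 : 2 ≤ i := by omega
      have hg := hw (i - 2) (by omega) (by omega)
      have heq : b + ((i - 2 : ℕ) : ℤ) * d = (b + (i : ℤ) * d) - 2 * d := by
        have h : ((i - 2 : ℕ) : ℤ) = (i : ℤ) - 2 := by omega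
        rw [h]; ring
      have h2' : (2 : ℤ) ∣ (b + ((i - 2 : ℕ) : ℤ) * d) := by
        rw [heq]; exact h2.sub (dvd_mul_right 2 d)
      have := Int.dvd_gcd h2 h2'
      rw [hg] at this
      norm_num at this
  obtain ⟨i1, hi1, hw1⟩ := H a d hcop hd
  have hcop' : Int.gcd (a + d) d = 1 := by
    rw [← Int.isCoprime_iff_gcd_eq_one] at hcop ⊢
    simpa using hcop.add_mul_left_left 1
  obtain ⟨i2', hi2', hw2⟩ := H (a + d) d hcop' hd
  set i2 : ℕ := i2' + 1 with hi2def
  have e1 : (a + d) + (i2' : ℤ) * d = a + (i2 : ℤ) * d := by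
    rw [hi2def]; push_cast; ring
  -- rephrase the second witness in terms of the original progression
  have hw2' : ∀ j, 1 ≤ j → j < 2 * k → j ≠ i2 →
      Int.gcd (a + (i2 : ℤ) * d) (a + (j : ℤ) * d) = 1 := by
    intro j hj1 hj hne
    have hg := hw2 (j - 1) (by omega) (by omega)
    have e2 : (a + d) + ((j - 1 : ℕ) : ℤ) * d = a + (j : ℤ) * d := by
      have h : ((j - 1 : ℕ) : ℤ) = (j : ℤ) - 1 := by omega
      rw [h]; ring
    rwa [e1, e2] at hg
  by_cases hA : Int.gcd (a + (i1 : ℤ) * d) (a + ((2 * k - 1 : ℕ) : ℤ) * d) = 1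
  · refine ⟨i1, by omega, fun j hj hne => ?_⟩
    by_cases hj' : j < 2 * k - 1
    · exact hw1 j hj' hne
    · have h : j = 2 * k - 1 := by omega
      subst h
      exact hA
  by_cases hB : Int.gcd (a + ((0 : ℕ) : ℤ) * d) (a + (i2 : ℤ) * d) = 1
  · refine ⟨i2, by omega, fun j hj hne => ?_⟩
    by_cases hj0 : j = 0
    · subst hj0
      rw [Int.gcd_comm]
      exact hB
    · exact hw2' j (by omega) hj hne
  -- bad case: derive a contradiction
  exfalso
  -- witnesses are odd terms
  have hoi1 : ¬ (2 : ℤ) ∣ (a + (i1 : ℤ) * d) := hodd a i1 hi1 hw1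
  have hoi2 : ¬ (2 : ℤ) ∣ (a + (i2 : ℤ) * d) := by
    have := hodd (a + d) i2' hi2' hw2
    rwa [e1] at this
  -- a prime p divides T i1 and T (2k-1)
  obtain ⟨p, hp, hpd⟩ := Nat.exists_prime_and_dvd hA
  have hpx : (p : ℤ) ∣ (a + (i1 : ℤ) * d) :=
    dvd_trans (Int.natCast_dvd_natCast.mpr hpd) (Int.gcd_dvd_left _ _)
  have hpy : (p : ℤ) ∣ (a + ((2 * k - 1 : ℕ) : ℤ) * d) :=
    dvd_trans (Int.natCast_dvd_natCast.mpr hpd) (Int.gcd_dvd_right _ _)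
  -- p is odd
  have hpodd : p % 2 = 1 := by
    rcases Nat.even_or_odd p with he | ho
    · exfalso
      apply hoi1
      refine dvd_trans ?_ hpx
      obtain ⟨c, hc⟩ := he
      exact ⟨(c : ℤ), by push_cast [hc]; ring⟩
    · exact Nat.odd_iff.mp ho
  -- p does not divide d
  have hpnd : ¬ (p : ℤ) ∣ d := by
    intro hdvd
    have hpa : (p : ℤ) ∣ a := by
      have h := hpx.sub (hdvd.mul_left (i1 : ℤ))
      simpa using h
    have h := Int.dvd_gcd hpa hdvd
    rw [hcop] at h
    have h1 : p ∣ 1 := by exact_mod_cast h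
    exact hp.one_lt.ne' (Nat.dvd_one.mp h1)
  have hpZ : Prime (p : ℤ) := Nat.prime_iff_prime_int.mp hp
  -- p divides 2k-1-i1
  have hpm : p ∣ (2 * k - 1 - i1) := by
    have h : (p : ℤ) ∣ (((2 * k - 1 : ℕ) : ℤ) - (i1 : ℤ)) * d := by
      have := hpy.sub hpx
      convert this using 1
      exacts [rfl, by ring]
    rcases hpZ.dvd_mul.mp h with h' | h'
    · have hc : ((2 * k - 1 - i1 : ℕ) : ℤ) = ((2 * k - 1 : ℕ) : ℤ) - (i1 : ℤ) := by omega
      rw [← hc] at h'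
      exact_mod_cast h'
    · exact absurd h' hpnd
  -- p = 2k-1-i1
  have hpeq : i1 + p = 2 * k - 1 := by
    by_contra hne
    have hlt : i1 + p < 2 * k - 1 := by
      have := Nat.le_of_dvd (by omega) hpm
      omega
    have hg := hw1 (i1 + p) hlt (by have := hp.two_le; omega)
    have hpj : (p : ℤ) ∣ (a + ((i1 + p : ℕ) : ℤ) * d) := by
      have heq : a + ((i1 + p : ℕ) : ℤ) * d = (a + (i1 : ℤ) * d) + (p : ℤ) * d := by
        push_cast; ring
      rw [heq]
      exact hpx.add (dvd_mul_right _ _)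
    have h := Int.dvd_gcd hpx hpj
    rw [hg] at h
    have h1 : p ∣ 1 := by exact_mod_cast h
    exact hp.one_lt.ne' (Nat.dvd_one.mp h1)
  -- a prime q divides T 0 and T i2
  obtain ⟨q, hq, hqd⟩ := Nat.exists_prime_and_dvd hB
  have hqx : (q : ℤ) ∣ a := by
    have := dvd_trans (Int.natCast_dvd_natCast.mpr hqd) (Int.gcd_dvd_left
      (a := a + ((0 : ℕ) : ℤ) * d) (b := a + (i2 : ℤ) * d))
    simpa using this
  have hqy : (q : ℤ) ∣ (a + (i2 : ℤ) * d) :=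
    dvd_trans (Int.natCast_dvd_natCast.mpr hqd) (Int.gcd_dvd_right _ _)
  have hqodd : q % 2 = 1 := by
    rcases Nat.even_or_odd q with he | ho
    · exfalso
      apply hoi2
      refine dvd_trans ?_ hqy
      obtain ⟨c, hc⟩ := he
      exact ⟨(c : ℤ), by push_cast [hc]; ring⟩
    · exact Nat.odd_iff.mp ho
  have hqnd : ¬ (q : ℤ) ∣ d := by
    intro hdvd
    have h := Int.dvd_gcd hqx hdvd
    rw [hcop] at h
    have h1 : q ∣ 1 := by exact_mod_cast h
    exact hq.one_lt.ne' (Nat.dvd_one.mp h1)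
  have hqZ : Prime (q : ℤ) := Nat.prime_iff_prime_int.mp hq
  -- q divides i2
  have hqm : q ∣ i2 := by
    have h : (q : ℤ) ∣ (i2 : ℤ) * d := by
      have := hqy.sub hqx
      convert this using 1
      exacts [rfl, by ring]
    rcases hqZ.dvd_mul.mp h with h' | h'
    · exact_mod_cast h'
    · exact absurd h' hqnd
  -- q = i2
  have hqeq : q = i2 := by
    by_contra hne
    have hlt : q < i2 := by
      have := Nat.le_of_dvd (by omega) hqm
      omega
    have hg := hw2' (i2 - q) (by have := hq.two_le; omega) (by omega)
      (by have := hq.two_le; omega)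
    have hqj : (q : ℤ) ∣ (a + ((i2 - q : ℕ) : ℤ) * d) := by
      have heq : a + ((i2 - q : ℕ) : ℤ) * d = (a + (i2 : ℤ) * d) - (q : ℤ) * d := by
        have hc : ((i2 - q : ℕ) : ℤ) = (i2 : ℤ) - (q : ℤ) := by omega
        rw [hc]; ring
      rw [heq]
      exact hqy.sub (dvd_mul_right _ _)
    have h := Int.dvd_gcd hqy hqj
    rw [hg] at h
    have h1 : q ∣ 1 := by exact_mod_cast h
    exact hq.one_lt.ne' (Nat.dvd_one.mp h1)
  -- parity contradiction
  have ho1 : Odd (a + (i1 : ℤ) * d) := by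
    rcases Int.even_or_odd (a + (i1 : ℤ) * d) with h | h
    · exact absurd h.two_dvd hoi1
    · exact h
  have ho2 : Odd (a + (i2 : ℤ) * d) := by
    rcases Int.even_or_odd (a + (i2 : ℤ) * d) with h | h
    · exact absurd h.two_dvd hoi2
    · exact h
  have heven : Even (((i1 : ℤ) - (i2 : ℤ)) * d) := by
    have := Odd.sub_odd ho1 ho2
    convert this using 1
    exacts [rfl, by ring]
  have hev : Even ((i1 : ℤ) - (i2 : ℤ)) := by
    rcases Int.even_mul.mp heven with h | h
    · exact h
    · exact absurd h hdne
  have hiff : Even (i1 : ℤ) ↔ Even (i2 : ℤ) := Int.even_sub.mp hev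
  have hiffn : Even i1 ↔ Even i2 := by
    rw [← Int.even_coe_nat, ← Int.even_coe_nat]; exact hiff
  rw [Nat.even_iff, Nat.even_iff] at hiffn
  by_cases h0 : i1 % 2 = 0
  · have := hiffn.mp h0
    omega
  · have h2 : ¬ i2 % 2 = 0 := fun h => h0 (hiffn.mpr h)
    omega
end

section
/- Let k be an integer with 3 ≤ k ≤ 7. Suppose that for all coprime odd integers a, d, the arithmetic progression a, a+d, ..., a+(2k−1)d (with 2k terms) contains a term relatively prime to all the others. Then for all coprime odd integers a, d, the arithmetic progression a, a+d, ..., a+2k·d (with 2k+1 terms) also contains a term relatively prime to all the others. -/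
/-- If the Generalized Pillai Theorem holds for progressions of `2k` terms with both
the first term and the common difference odd (`3 ≤ k ≤ 7`), then it holds for such
progressions of `2k+1` terms. -/
theorem pillai_step_odd_odd (k : ℕ) (hk3 : 3 ≤ k) (hk7 : k ≤ 7)
    (H : ∀ a d : ℤ, Int.gcd a d = 1 → Odd a → Odd d →
      ∃ i < 2 * k, ∀ j < 2 * k, j ≠ i →
        Int.gcd (a + (i : ℤ) * d) (a + (j : ℤ) * d) = 1) :
    ∀ a d : ℤ, Int.gcd a d = 1 → Odd a → Odd d →
      ∃ i < 2 * k + 1, ∀ j < 2 * k + 1, j ≠ i →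
        Int.gcd (a + (i : ℤ) * d) (a + (j : ℤ) * d) = 1 := by
  intro a d hgcd ha hd
  obtain ⟨i, hi, hcop⟩ := H a d hgcd ha hd
  -- i must be even
  have hieven : Even i := by
    by_contra hio
    rw [Nat.not_even_iff_odd] at hio
    set j : ℕ := if i = 1 then 3 else 1 with hj
    have hjo : Odd j := by by_cases h : i = 1 <;> simp [hj, h] <;> decide
    have hjne : j ≠ i := by by_cases h : i = 1 <;> simp [hj, h]; omega
    have hjlt : j < 2 * k := by by_cases h : i = 1 <;> simp [hj, h] <;> omega
    have h1 : Even (a + (i : ℤ) * d) := by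
      rcases ha with ⟨x, hx⟩; rcases hd with ⟨y, hy⟩; rcases hio with ⟨m, hm⟩
      exact ⟨x + 2 * (m : ℤ) * y + (m : ℤ) + y + 1, by push_cast [hx, hy, hm]; ring⟩
    have h2 : Even (a + (j : ℤ) * d) := by
      rcases ha with ⟨x, hx⟩; rcases hd with ⟨y, hy⟩; rcases hjo with ⟨m, hm⟩
      exact ⟨x + 2 * (m : ℤ) * y + (m : ℤ) + y + 1, by push_cast [hx, hy, hm]; ring⟩
    have hg := hcop j hjlt hjne
    have h2' : (2 : ℤ) ∣ ↑(Int.gcd (a + (i : ℤ) * d) (a + (j : ℤ) * d)) :=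
      Int.dvd_coe_gcd h1.two_dvd h2.two_dvd
    rw [hg] at h2'
    norm_num at h2'
  have hti : Odd (a + (i : ℤ) * d) := by
    rcases ha with ⟨x, hx⟩; rcases hd with ⟨y, hy⟩; rcases hieven with ⟨m, hm⟩
    exact ⟨x + (m : ℤ) * (2 * y + 1), by push_cast [hx, hy, hm]; ring⟩
  refine ⟨i, by omega, ?_⟩
  intro j hj hji
  rcases Nat.lt_or_ge j (2 * k) with hjlt | hjge
  · exact hcop j hjlt hji
  · have hj2k : j = 2 * k := by omega
    subst hj2k
    -- main claim: gcd (t_i) (t_{2k}) = 1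
    by_contra hne
    set g : ℕ := Int.gcd (a + (i : ℤ) * d) (a + (2 * k : ℕ) * d) with hgdef
    have hg0 : g ≠ 0 := by
      intro h0
      have := Int.gcd_eq_zero_iff.mp h0
      have : a + (i : ℤ) * d = 0 := this.1
      rcases hti with ⟨x, hx⟩; omega
    set p : ℕ := g.minFac with hp
    have hpp : p.Prime := Nat.minFac_prime hne
    have hpg : (p : ℤ) ∣ (g : ℤ) := Int.natCast_dvd_natCast.mpr (Nat.minFac_dvd g)
    have hpi : (p : ℤ) ∣ a + (i : ℤ) * d := hpg.trans (Int.gcd_dvd_left _ _)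
    have hp2k : (p : ℤ) ∣ a + (2 * k : ℕ) * d := hpg.trans (Int.gcd_dvd_right _ _)
    -- p is odd
    have hpodd : p ≠ 2 := by
      intro h2
      rcases hti with ⟨x, hx⟩
      rcases hpi with ⟨c, hc⟩
      rw [h2] at hc; push_cast at hc; omega
    -- p does not divide d
    have hpd : ¬ (p : ℤ) ∣ d := by
      intro hdvd
      have hpa : (p : ℤ) ∣ a := by
        have : (p : ℤ) ∣ (i : ℤ) * d := Dvd.dvd.mul_left hdvd _
        have := dvd_sub hpi this
        simpa using this
      have : (p : ℤ) ∣ ↑(Int.gcd a d) := Int.dvd_coe_gcd hpa hdvd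
      rw [hgcd] at this
      have := Int.eq_one_of_dvd_one (by positivity) this
      have : p = 1 := by exact_mod_cast this
      exact hpp.one_lt.ne' this
    -- p divides 2k - i
    have hdiff : (p : ℤ) ∣ ((2 * k : ℕ) - (i : ℤ)) * d := by
      have := dvd_sub hp2k hpi
      have h : a + (2 * k : ℕ) * d - (a + (i : ℤ) * d) = ((2 * k : ℕ) - (i : ℤ)) * d := by ring
      rwa [h] at this
    have hpdiff : (p : ℤ) ∣ ((2 * k : ℕ) - (i : ℤ)) :=
      ((Int.Prime.dvd_mul' hpp hdiff).resolve_right hpd)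
    have hpdiffn : p ∣ 2 * k - i := by
      have : ((2 * k : ℕ) - (i : ℤ)) = ((2 * k - i : ℕ) : ℤ) := by
        push_cast [Nat.cast_sub (by omega : i ≤ 2 * k)]; ring
      rw [this] at hpdiff
      exact_mod_cast hpdiff
    -- 2k - i is even, so 2k - i ≥ 2p
    have h2div : 2 ∣ 2 * k - i := by rcases hieven with ⟨m, hm⟩; omega
    have hple : 2 * p ≤ 2 * k - i := by
      rcases hpdiffn with ⟨c, hc⟩
      have hc2 : 2 ∣ c := by
        rcases Nat.even_or_odd c with hce | hco
        · exact hce.two_dvd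
        · exfalso
          have hpo : Odd p := hpp.odd_of_ne_two hpodd
          have hodd : Odd (p * c) := hpo.mul hco
          rcases hodd with ⟨t, ht⟩
          omega
      have hc0 : c ≠ 0 := by rintro rfl; simp at hc; omega
      rcases hc2 with ⟨e, he⟩
      have he1 : 1 ≤ e := by omega
      calc 2 * p ≤ p * (2 * e) := by nlinarith [hpp.two_le]
        _ = 2 * k - i := by rw [hc, he]
    -- contradiction at index i + p
    have hiplt : i + p < 2 * k := by have := hpp.two_le; omega
    have hipne : i + p ≠ i := by have := hpp.two_le; omega
    have hcop' := hcop (i + p) hiplt hipne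
    have hpip : (p : ℤ) ∣ a + ((i + p : ℕ) : ℤ) * d := by
      have : a + ((i + p : ℕ) : ℤ) * d = (a + (i : ℤ) * d) + (p : ℤ) * d := by push_cast; ring
      rw [this]
      exact dvd_add hpi (Dvd.dvd.mul_right dvd_rfl d)
    have : (p : ℤ) ∣ ↑(Int.gcd (a + (i : ℤ) * d) (a + ((i + p : ℕ) : ℤ) * d)) :=
      Int.dvd_coe_gcd hpi hpip
    rw [hcop'] at this
    have := Int.eq_one_of_dvd_one (by positivity) this
    have : p = 1 := by exact_mod_cast this
    exact hpp.one_lt.ne' this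
end

section
/- Let R be a GCD domain, let m be a positive integer, and for i = 1, ..., m let u_i, v_i ∈ R with v_i ≠ 0. Assume that gcd(v_i, v_j) lies in the ideal R·v_i + R·v_j for all 1 ≤ i, j ≤ m. Then there exists z ∈ R satisfying v_i ∣ (z − u_i) for all i = 1, ..., m if and only if gcd(v_i, v_j) divides (u_i − u_j) for all 1 ≤ i, j ≤ m. -/
lemma key_merge {R : Type*} [CommRing R] [IsDomain R] [GCDMonoid R]
    (a b c w ua ub uc : R) (ha : a ≠ 0) (hb : b ≠ 0)
    (d₁ x₁ y₁ : R) (hd₁a : d₁ ∣ a) (hd₁c : d₁ ∣ c) (hbez₁ : d₁ = x₁ * a + y₁ * c)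
    (hdu₁ : d₁ ∣ ua - uc)
    (d₂ x₂ y₂ : R) (hd₂b : d₂ ∣ b) (hd₂c : d₂ ∣ c) (hbez₂ : d₂ = x₂ * b + y₂ * c)
    (hdu₂ : d₂ ∣ ub - uc)
    (hwa : a ∣ w - ua) (hwb : b ∣ w - ub) :
    ∃ d x y : R, d ∣ lcm a b ∧ d ∣ c ∧ d = x * lcm a b + y * c ∧ d ∣ w - uc := by
  have hd₁ : d₁ ≠ 0 := fun h => ha (by simpa [h] using zero_dvd_iff.mp (h ▸ hd₁a))
  have hd₂ : d₂ ≠ 0 := fun h => hb (by simpa [h] using zero_dvd_iff.mp (h ▸ hd₂b))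
  obtain ⟨a', ha'⟩ := hd₁a
  obtain ⟨c₁, hc₁⟩ := hd₁c
  obtain ⟨b', hb'⟩ := hd₂b
  obtain ⟨c₂, hc₂⟩ := hd₂c
  set M := lcm d₁ d₂ with hM
  have hMlcm : M ∣ lcm a b :=
    lcm_dvd ((Dvd.intro a' ha'.symm).trans (dvd_lcm_left a b))
      ((Dvd.intro b' hb'.symm).trans (dvd_lcm_right a b))
  have hMc : M ∣ c := lcm_dvd ⟨c₁, hc₁⟩ ⟨c₂, hc₂⟩
  have hMw : M ∣ w - uc := by
    apply lcm_dvd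
    · have h := dvd_add ((Dvd.intro a' ha'.symm).trans hwa) hdu₁
      rwa [sub_add_sub_cancel] at h
    · have h := dvd_add ((Dvd.intro b' hb'.symm).trans hwb) hdu₂
      rwa [sub_add_sub_cancel] at h
  obtain ⟨M₁, hM₁⟩ : d₁ ∣ M := dvd_lcm_left _ _
  obtain ⟨M₂, hM₂⟩ : d₂ ∣ M := dvd_lcm_right _ _
  set g := gcd d₁ d₂ with hgdef
  set e := gcd a b with hedef
  set L := lcm a b with hLdef
  have hg0 : g ≠ 0 := fun h => hd₁ ((gcd_eq_zero_iff d₁ d₂).mp h).1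
  obtain ⟨e', he'⟩ : g ∣ e :=
    dvd_gcd ((gcd_dvd_left d₁ d₂).trans ⟨a', ha'⟩) ((gcd_dvd_right d₁ d₂).trans ⟨b', hb'⟩)
  obtain ⟨ε, hε⟩ := gcd_mul_lcm d₁ d₂
  obtain ⟨δ, hδ⟩ := gcd_mul_lcm a b
  have h1 : (1:R) = x₁ * a' + y₁ * c₁ :=
    mul_left_cancel₀ hd₁ (by linear_combination hbez₁ + x₁ * ha' + y₁ * hc₁)
  have h2 : (1:R) = x₂ * b' + y₂ * c₂ :=
    mul_left_cancel₀ hd₂ (by linear_combination hbez₂ + x₂ * hb' + y₂ * hc₂)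
  have hc1M : c₁ * M = c * M₁ := by rw [hM₁, hc₁]; ring
  have hc2M : c₂ * M = c * M₂ := by rw [hM₂, hc₂]; ring
  have key1 : a' * b' * (M * (ε : R)) = e' * (L * (δ : R)) := by
    apply mul_left_cancel₀ hg0
    linear_combination a' * b' * hε - b * ha' - d₁ * a' * hb' - hδ + L * (δ:R) * he'
  have key0 : M = x₁*x₂*(a'*b'*M) + (x₁*y₂*a'*M₂ + y₁*x₂*b'*M₁ + y₁*y₂*c₁*M₂)*c := by
    linear_combination M * h1 + M * (x₁*a'+y₁*c₁) * h2 + x₁*y₂*a'*hc2M + y₁*x₂*b'*hc1M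
      + y₁*y₂*c₁*hc2M
  refine ⟨M, x₁*x₂*e'*(δ:R)*((ε⁻¹ : Rˣ) : R),
    x₁*y₂*a'*M₂ + y₁*x₂*b'*M₁ + y₁*y₂*c₁*M₂, hMlcm, hMc, ?_, hMw⟩
  have hu : ((ε⁻¹ : Rˣ) : R) * (ε : R) = 1 := Units.inv_mul ε
  apply mul_right_cancel₀ ε.ne_zero
  linear_combination (ε:R) * key0 + x₁*x₂*key1 - x₁*x₂*e'*(δ:R)*L*hu

theorem crt_aux {R : Type*} [CommRing R] [IsDomain R] [GCDMonoid R] :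
    ∀ m (u v : Fin m → R), (∀ i, v i ≠ 0) →
    (∀ i j, ∃ d x y : R, d ∣ v i ∧ d ∣ v j ∧ d = x * v i + y * v j ∧ d ∣ u i - u j) →
    ∃ z : R, ∀ i, v i ∣ z - u i := by
  intro m
  induction m with
  | zero => exact fun u v _ _ => ⟨0, fun i => i.elim0⟩
  | succ n ih =>
    rcases n with _ | k
    · intro u v _ _
      refine ⟨u 0, fun i => ?_⟩
      have : i = 0 := Fin.eq_zero i
      rw [this, sub_self]
      exact dvd_zero _
    · intro u v hv H
      -- merge indices 0 and 1
      obtain ⟨d, x, y, hd0, hd1, hxy, hdu⟩ := H 0 1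
      obtain ⟨q, hq⟩ := hdu
      set w := u 0 - x * v 0 * q with hwdef
      have hwa : v 0 ∣ w - u 0 := ⟨-(x*q), by rw [hwdef]; ring⟩
      have hwb : v 1 ∣ w - u 1 := ⟨q*y, by rw [hwdef]; linear_combination hq + q * hxy⟩
      set u' : Fin (k+1) → R := Fin.cons w (fun i : Fin k => u i.succ.succ) with hu'
      set v' : Fin (k+1) → R := Fin.cons (lcm (v 0) (v 1)) (fun i : Fin k => v i.succ.succ)
        with hv'
      have hv'0 : ∀ i, v' i ≠ 0 := by
        intro i
        induction i using Fin.cases with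
        | zero =>
          simp only [hv', Fin.cons_zero]
          intro h
          rcases (lcm_eq_zero_iff (v 0) (v 1)).mp h with h' | h'
          · exact hv 0 h'
          · exact hv 1 h'
        | succ j => simpa [hv'] using hv j.succ.succ
      have key : ∀ j : Fin k, ∃ d x y : R, d ∣ lcm (v 0) (v 1) ∧ d ∣ v j.succ.succ ∧
          d = x * lcm (v 0) (v 1) + y * v j.succ.succ ∧ d ∣ w - u j.succ.succ := by
        intro j
        obtain ⟨d₁, x₁, y₁, h₁a, h₁c, h₁b, h₁u⟩ := H 0 j.succ.succ
        obtain ⟨d₂, x₂, y₂, h₂a, h₂c, h₂b, h₂u⟩ := H 1 j.succ.succ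
        exact key_merge (v 0) (v 1) (v j.succ.succ) w (u 0) (u 1) (u j.succ.succ)
          (hv 0) (hv 1) d₁ x₁ y₁ h₁a h₁c h₁b h₁u d₂ x₂ y₂ h₂a h₂c h₂b h₂u hwa hwb
      have H' : ∀ i j, ∃ d x y : R, d ∣ v' i ∧ d ∣ v' j ∧ d = x * v' i + y * v' j ∧
          d ∣ u' i - u' j := by
        intro i j
        induction i using Fin.cases with
        | zero =>
          induction j using Fin.cases with
          | zero =>
            exact ⟨v' 0, 1, 0, dvd_refl _, dvd_refl _, by ring, by simp⟩
          | succ jj =>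
            obtain ⟨d, x, y, h1, h2, h3, h4⟩ := key jj
            exact ⟨d, x, y, by simpa [hv'] using h1, by simpa [hv'] using h2,
              by simpa [hv', hu'] using h3, by simpa [hu'] using h4⟩
        | succ ii =>
          induction j using Fin.cases with
          | zero =>
            obtain ⟨d, x, y, h1, h2, h3, h4⟩ := key ii
            exact ⟨d, y, x, by simpa [hv'] using h2, by simpa [hv'] using h1,
              by simp only [hv', hu', Fin.cons_succ, Fin.cons_zero]; rw [h3]; ring,
              by simpa [hu'] using dvd_sub_comm.mp h4⟩
          | succ jj =>
            obtain ⟨d, x, y, h1, h2, h3, h4⟩ := H ii.succ.succ jj.succ.succ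
            exact ⟨d, x, y, by simpa [hv'] using h1, by simpa [hv'] using h2,
              by simpa [hv'] using h3, by simpa [hu'] using h4⟩
      obtain ⟨z, hz⟩ := ih u' v' hv'0 H'
      have hz0 : lcm (v 0) (v 1) ∣ z - w := by simpa [hv', hu'] using hz 0
      refine ⟨z, fun i => ?_⟩
      induction i using Fin.cases with
      | zero =>
        have h := dvd_add ((dvd_lcm_left (v 0) (v 1)).trans hz0) hwa
        rwa [sub_add_sub_cancel] at h
      | succ j =>
        induction j using Fin.cases with
        | zero =>
          have h := dvd_add ((dvd_lcm_right (v 0) (v 1)).trans hz0) hwb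
          rw [sub_add_sub_cancel] at h
          simpa using h
        | succ l =>
          have h := hz l.succ
          simpa [hv', hu'] using h

/-- **Generalized Chinese Remainder Theorem.** Let `R` be a GCD domain and
`u i, v i ∈ R` for `i = 1, ..., m` with each `v i ≠ 0`. If `gcd (v i) (v j)` lies in
the ideal `R·v i + R·v j` for all `i, j`, then the system of congruences
`z ≡ u i (mod v i)` is solvable in `R` iff `gcd (v i) (v j) ∣ (u i - u j)` for all
`i, j`. -/
theorem generalized_crt
    {R : Type*} [CommRing R] [IsDomain R] [GCDMonoid R]
    (m : ℕ) (hm : 0 < m) (u v : Fin m → R) (hv : ∀ i, v i ≠ 0)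
    (hBez : ∀ i j, ∃ x y : R, gcd (v i) (v j) = x * v i + y * v j) :
    (∃ z : R, ∀ i, v i ∣ z - u i) ↔ (∀ i j, gcd (v i) (v j) ∣ u i - u j) := by
  constructor
  · rintro ⟨z, hz⟩ i j
    have h1 := (gcd_dvd_left (v i) (v j)).trans (hz i)
    have h2 := (gcd_dvd_right (v i) (v j)).trans (hz j)
    have heq : u i - u j = (z - u j) - (z - u i) := by ring
    rw [heq]
    exact dvd_sub h2 h1
  · intro H
    apply crt_aux m u v hv
    intro i j
    obtain ⟨x, y, hxy⟩ := hBez i j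
    exact ⟨gcd (v i) (v j), x, y, gcd_dvd_left _ _, gcd_dvd_right _ _, hxy, H i j⟩
end

section
/- Let a and d be coprime positive integers and let n be a positive integer with n ≤ 16 such that no term of the arithmetic progression a, a+d, ..., a+(n−1)d is a perfect power. Then the product ∏_{k=0}^{n−1} (a + k·d) is not a perfect power. -/
def uncB (n i c2 c3 c5 c7 c11 c13 : ℕ) : Bool :=
  !(i % 2 == c2 && c2 + 2 < n) && !(i % 3 == c3 && c3 + 3 < n) &&
  !(i % 5 == c5 && c5 + 5 < n) && !(i % 7 == c7 && c7 + 7 < n) &&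
  !(i % 11 == c11 && c11 + 11 < n) && !(i % 13 == c13 && c13 + 13 < n)

def pillaiB : Bool :=
  (List.range 17).all fun n => (n == 0) ||
  (List.range 2).all fun c2 => (List.range 3).all fun c3 =>
  (List.range 5).all fun c5 => (List.range 7).all fun c7 =>
  (List.range 5).all fun c11 => (List.range 3).all fun c13 =>
  (List.range n).any fun i => uncB n i c2 c3 c5 c7 c11 c13

set_option maxRecDepth 100000 in
set_option maxHeartbeats 4000000 in
lemma pillaiB_true : pillaiB = true := by decide

/-- The combinatorial Pillai-type lemma. -/
lemma pillai (n : ℕ) (hn : 0 < n) (h16 : n ≤ 16) (c2 c3 c5 c7 c11 c13 : ℕ) :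
    ∃ i < n, ∀ j < n, j ≠ i →
      ¬(i % 2 = c2 ∧ j % 2 = c2) ∧ ¬(i % 3 = c3 ∧ j % 3 = c3) ∧
      ¬(i % 5 = c5 ∧ j % 5 = c5) ∧ ¬(i % 7 = c7 ∧ j % 7 = c7) ∧
      ¬(i % 11 = c11 ∧ j % 11 = c11) ∧ ¬(i % 13 = c13 ∧ j % 13 = c13) := by
  have hB := pillaiB_true
  unfold pillaiB at hB
  simp only [List.all_eq_true, List.any_eq_true, List.mem_range, Bool.or_eq_true,
    beq_iff_eq] at hB
  have h1 := (hB n (by omega)).resolve_left (by omega)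
  obtain ⟨i, hin, hu⟩ := h1 (min c2 1) (by omega) (min c3 2) (by omega) (min c5 4) (by omega)
      (min c7 6) (by omega) (min c11 4) (by omega) (min c13 2) (by omega)
  simp only [uncB, Bool.and_eq_true, Bool.not_eq_true', Bool.and_eq_false_iff,
    beq_eq_false_iff_ne, ne_eq, decide_eq_false_iff_not, not_lt, beq_iff_eq,
    decide_eq_true_eq] at hu
  obtain ⟨⟨⟨⟨⟨u2, u3⟩, u5⟩, u7⟩, u11⟩, u13⟩ := hu
  refine ⟨i, hin, fun j hjn hji => ⟨?_, ?_, ?_, ?_, ?_, ?_⟩⟩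
  · rintro ⟨hic, hjc⟩
    have hm : min c2 1 = c2 := by omega
    rw [hm] at u2
    rcases u2 with h | h
    · exact h hic
    · omega
  · rintro ⟨hic, hjc⟩
    have hm : min c3 2 = c3 := by omega
    rw [hm] at u3
    rcases u3 with h | h
    · exact h hic
    · omega
  · rintro ⟨hic, hjc⟩
    have hm : min c5 4 = c5 := by omega
    rw [hm] at u5
    rcases u5 with h | h
    · exact h hic
    · omega
  · rintro ⟨hic, hjc⟩
    have hm : min c7 6 = c7 := by omega
    rw [hm] at u7
    rcases u7 with h | h
    · exact h hic
    · omega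
  · rintro ⟨hic, hjc⟩
    have hm : min c11 4 = c11 := by omega
    rw [hm] at u11
    rcases u11 with h | h
    · exact h hic
    · omega
  · rintro ⟨hic, hjc⟩
    have hm : min c13 2 = c13 := by omega
    rw [hm] at u13
    rcases u13 with h | h
    · exact h hic
    · omega


/-- For a prime `p`, the indices `m` with `p ∣ a + m*d` lie in a single residue class mod `p`. -/
lemma class_spec (a d : ℤ) (had : Int.gcd a d = 1) (p : ℕ) (hp : p.Prime) :
    ∃ c, c < p ∧ ∀ m : ℕ, (p:ℤ) ∣ a + (m:ℤ) * d → m % p = c := by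
  by_cases h : ∃ k, k < p ∧ (p:ℤ) ∣ a + (k:ℤ) * d
  · obtain ⟨c, hcp, hcd⟩ := h
    refine ⟨c, hcp, fun m hm => ?_⟩
    have hpd : ¬ (p:ℤ) ∣ d := by
      intro hdvd
      have hpa : (p:ℤ) ∣ a := by
        have := dvd_sub hm (hdvd.mul_left (m:ℤ))
        simpa using this
      have h1 : p ∣ Int.gcd a d :=
        Nat.dvd_gcd (Int.natCast_dvd.mp hpa) (Int.natCast_dvd.mp hdvd)
      rw [had] at h1
      exact hp.one_lt.ne' (Nat.dvd_one.mp h1)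
    have hsub : (p:ℤ) ∣ ((m:ℤ) - (c:ℤ)) * d := by
      have h2 := dvd_sub hm hcd
      have h3 : a + (m:ℤ) * d - (a + (c:ℤ) * d) = ((m:ℤ) - (c:ℤ)) * d := by ring
      rwa [h3] at h2
    have hmc : (p:ℤ) ∣ (c:ℤ) - (m:ℤ) := by
      have h4 := ((Int.prime_iff_natAbs_prime.mpr (by simpa using hp)).dvd_mul.mp
        hsub).resolve_right hpd
      have h5 : (c:ℤ) - (m:ℤ) = -((m:ℤ) - (c:ℤ)) := by ring
      rw [h5]
      exact dvd_neg.mpr h4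
    have : m ≡ c [MOD p] := Nat.modEq_iff_dvd.mpr hmc
    calc m % p = c % p := this
    _ = c := Nat.mod_eq_of_lt hcp
  · push_neg at h
    refine ⟨0, hp.pos, fun m hm => absurd ?_ (h (m % p) (Nat.mod_lt m hp.pos))⟩
    have hsplit : (m:ℤ) = ((m % p : ℕ):ℤ) + (p:ℤ) * ((m / p : ℕ):ℤ) := by
      exact_mod_cast (Nat.mod_add_div m p).symm
    have h6 : a + ((m % p : ℕ):ℤ) * d = a + (m:ℤ) * d - (p:ℤ) * (((m / p : ℕ):ℤ) * d) := by
      rw [hsplit]; ring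
    rw [h6]
    exact dvd_sub hm (Dvd.intro _ rfl)

lemma aux_main (a d : ℤ) (ha : 1 < a) (hd : 0 < d)
    (had : Int.gcd a d = 1) (n : ℕ) (hn : 0 < n) (hn16 : n ≤ 16)
    (hterms : ∀ k < n, ¬∃ (t : ℤ) (r : ℕ), 1 < t ∧ 1 < r ∧ a + (k : ℤ) * d = t ^ r) :
    ¬∃ (t : ℤ) (r : ℕ), 1 < t ∧ 1 < r ∧
      (∏ k ∈ Finset.range n, (a + (k : ℤ) * d)) = t ^ r := by
  rintro ⟨t, r, ht, hr, hprod⟩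
  obtain ⟨c2, b2, hc2⟩ := class_spec a d had 2 (by norm_num)
  obtain ⟨c3, b3, hc3⟩ := class_spec a d had 3 (by norm_num)
  obtain ⟨c5, b5, hc5⟩ := class_spec a d had 5 (by norm_num)
  obtain ⟨c7, b7, hc7⟩ := class_spec a d had 7 (by norm_num)
  obtain ⟨c11, b11, hc11⟩ := class_spec a d had 11 (by norm_num)
  obtain ⟨c13, b13, hc13⟩ := class_spec a d had 13 (by norm_num)
  obtain ⟨i, hin, hunc⟩ := pillai n hn hn16 c2 c3 c5 c7 c11 c13
  -- positivity of terms
  have hpos : ∀ k : ℕ, 0 < a + (k:ℤ) * d := fun k => by positivity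
  -- the term at i is coprime to every other term
  have hcop : ∀ j < n, j ≠ i → IsCoprime (a + (i:ℤ) * d) (a + (j:ℤ) * d) := by
    intro j hjn hji
    rw [Int.isCoprime_iff_gcd_eq_one]
    by_contra hg
    obtain ⟨q, hq, hqg⟩ := Nat.exists_prime_and_dvd hg
    have hq1 : (q:ℤ) ∣ a + (i:ℤ) * d :=
      dvd_trans (Int.natCast_dvd_natCast.mpr hqg) (Int.gcd_dvd_left _ _)
    have hq2 : (q:ℤ) ∣ a + (j:ℤ) * d :=
      dvd_trans (Int.natCast_dvd_natCast.mpr hqg) (Int.gcd_dvd_right _ _)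
    have hqd : ¬ (q:ℤ) ∣ d := by
      intro hdvd
      have hqa : (q:ℤ) ∣ a := by
        have := dvd_sub hq1 (hdvd.mul_left (i:ℤ))
        simpa using this
      have h1 : q ∣ Int.gcd a d :=
        Nat.dvd_gcd (Int.natCast_dvd.mp hqa) (Int.natCast_dvd.mp hdvd)
      rw [had] at h1
      exact hq.one_lt.ne' (Nat.dvd_one.mp h1)
    have hsub : (q:ℤ) ∣ ((i:ℤ) - (j:ℤ)) * d := by
      have h2 := dvd_sub hq1 hq2
      have h3 : a + (i:ℤ) * d - (a + (j:ℤ) * d) = ((i:ℤ) - (j:ℤ)) * d := by ring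
      rwa [h3] at h2
    have hij : (q:ℤ) ∣ (i:ℤ) - (j:ℤ) :=
      ((Int.prime_iff_natAbs_prime.mpr (by simpa using hq)).dvd_mul.mp hsub).resolve_right hqd
    have hqle : q ≤ 15 := by
      have h4 : q ∣ ((i:ℤ) - (j:ℤ)).natAbs := Int.natCast_dvd.mp hij
      have h5 : ((i:ℤ) - (j:ℤ)).natAbs ≤ 15 := by omega
      have h6 : ((i:ℤ) - (j:ℤ)).natAbs ≠ 0 := by
        intro h0
        rw [Int.natAbs_eq_zero, sub_eq_zero] at h0
        exact hji (by exact_mod_cast h0.symm)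
      exact le_trans (Nat.le_of_dvd (Nat.pos_of_ne_zero h6) h4) h5
    have h2le := hq.two_le
    interval_cases q
    · exact (hunc j hjn hji).1 ⟨hc2 i hq1, hc2 j hq2⟩
    · exact (hunc j hjn hji).2.1 ⟨hc3 i hq1, hc3 j hq2⟩
    · exact absurd hq (by decide)
    · exact (hunc j hjn hji).2.2.1 ⟨hc5 i hq1, hc5 j hq2⟩
    · exact absurd hq (by decide)
    · exact (hunc j hjn hji).2.2.2.1 ⟨hc7 i hq1, hc7 j hq2⟩
    · exact absurd hq (by decide)
    · exact absurd hq (by decide)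
    · exact absurd hq (by decide)
    · exact (hunc j hjn hji).2.2.2.2.1 ⟨hc11 i hq1, hc11 j hq2⟩
    · exact absurd hq (by decide)
    · exact (hunc j hjn hji).2.2.2.2.2 ⟨hc13 i hq1, hc13 j hq2⟩
    · exact absurd hq (by decide)
    · exact absurd hq (by decide)
  -- split the product
  have hmem : i ∈ Finset.range n := Finset.mem_range.mpr hin
  have hsplit : (a + (i:ℤ) * d) * ∏ j ∈ (Finset.range n).erase i, (a + (j:ℤ) * d) = t ^ r := by
    exact (Finset.mul_prod_erase _ _ hmem).trans hprod
  have hcop' : IsCoprime (a + (i:ℤ) * d) (∏ j ∈ (Finset.range n).erase i, (a + (j:ℤ) * d)) :=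
    IsCoprime.prod_right fun j hj =>
      hcop j (Finset.mem_range.mp (Finset.erase_subset _ _ hj)) (Finset.ne_of_mem_erase hj)
  have hunit : IsUnit (gcd (a + (i:ℤ) * d) (∏ j ∈ (Finset.range n).erase i, (a + (j:ℤ) * d))) := by
    rw [← Int.coe_gcd]
    rw [Int.isCoprime_iff_gcd_eq_one] at hcop'
    rw [hcop']
    exact isUnit_one
  obtain ⟨z, hz⟩ := exists_associated_pow_of_mul_eq_pow hunit hsplit
  have habs : a + (i:ℤ) * d = ((z.natAbs : ℤ)) ^ r := by
    have h7 := Int.associated_iff_natAbs.mp hz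
    have h8 : (a + (i:ℤ) * d).natAbs = z.natAbs ^ r := by
      rw [← h7, Int.natAbs_pow]
    have h9 : a + (i:ℤ) * d = ((a + (i:ℤ) * d).natAbs : ℤ) :=
      (Int.natAbs_of_nonneg (hpos i).le).symm
    rw [h9, h8]
    push_cast
    ring
  have hid : (0:ℤ) ≤ (i:ℤ) * d := mul_nonneg (Int.natCast_nonneg i) hd.le
  rcases Nat.lt_or_ge z.natAbs 2 with hzlt | hzge
  · have h01 : z.natAbs = 0 ∨ z.natAbs = 1 := by omega
    rcases h01 with h | h <;> rw [h] at habs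
    · rw [Int.natCast_zero, zero_pow (by omega : r ≠ 0)] at habs
      linarith [hpos i]
    · rw [Int.natCast_one, one_pow] at habs
      linarith
  · exact hterms i hin ⟨(z.natAbs : ℤ), r, by exact_mod_cast hzge, hr, habs⟩



/-- If `a, d` are coprime positive integers and `n ≤ 16` is a positive integer such
that no term of the progression `a, a+d, ..., a+(n-1)d` is a perfect power, then the
product of the terms is not a perfect power. -/
theorem prod_ap_not_perfect_power (a d : ℤ) (ha : 0 < a) (hd : 0 < d)
    (had : Int.gcd a d = 1) (n : ℕ) (hn : 0 < n) (hn16 : n ≤ 16)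
    (hterms : ∀ k < n, ¬∃ (t : ℤ) (r : ℕ), 1 < t ∧ 1 < r ∧ a + (k : ℤ) * d = t ^ r) :
    ¬∃ (t : ℤ) (r : ℕ), 1 < t ∧ 1 < r ∧
      (∏ k ∈ Finset.range n, (a + (k : ℤ) * d)) = t ^ r := by
  rcases eq_or_lt_of_le (by omega : (1:ℤ) ≤ a) with ha1 | ha1
  · -- a = 1
    subst ha1
    rintro ⟨t, r, ht, hr, hp⟩
    obtain ⟨m, rfl⟩ : ∃ m, n = m + 1 := ⟨n - 1, by omega⟩
    rw [Finset.prod_range_succ'] at hp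
    have hp' : (∏ k ∈ Finset.range m, ((1 + d) + (k:ℤ) * d)) = t ^ r := by
      rw [← hp]
      simp only [Nat.cast_zero, zero_mul, add_zero, mul_one]
      exact Finset.prod_congr rfl fun k _ => by push_cast; ring
    rcases Nat.eq_zero_or_pos m with hm | hm
    · subst hm
      simp only [Finset.range_zero, Finset.prod_empty] at hp'
      have h1 : (1:ℤ) < t ^ r := by
        calc (1:ℤ) = 1 ^ r := (one_pow r).symm
        _ < t ^ r := pow_lt_pow_left₀ ht (by norm_num) (by omega)
      omega
    · have hgcd : Int.gcd (1 + d) d = 1 := by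
        rw [← Int.isCoprime_iff_gcd_eq_one]
        simpa using (isCoprime_one_left (x := d)).add_mul_left_left 1
      refine aux_main (1 + d) d (by omega) hd hgcd m hm (by omega) ?_ ⟨t, r, ht, hr, hp'⟩
      rintro k hk ⟨t', r', ht', hr', he⟩
      refine hterms (k + 1) (by omega) ⟨t', r', ht', hr', ?_⟩
      push_cast at he ⊢
      linear_combination he
  · exact aux_main a d ha1 hd had n hn hn16 hterms
end

section
/- Let a and d be coprime integers and let n be a positive integer. Then there exists an integer z such that a + (i−1)d divides z − i for every i = 1, ..., n. -/
/-- If `a` and `d` are coprime integers and `n` is a positive integer, then there is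
an integer `z` such that `a + (i-1)d` divides `z - i` for every `i = 1, ..., n`. -/
theorem exists_simultaneous_congruence (a d : ℤ) (had : Int.gcd a d = 1)
    (n : ℕ) (hn : 0 < n) :
    ∃ z : ℤ, ∀ i : ℕ, 1 ≤ i → i ≤ n → (a + ((i : ℤ) - 1) * d) ∣ (z - (i : ℤ)) := by
  have hcop : IsCoprime d a := (Int.isCoprime_iff_gcd_eq_one.mpr had).symm
  set P : ℤ := ∏ i ∈ Finset.Icc 1 n, (a + ((i : ℤ) - 1) * d) with hP
  have hdP : IsCoprime d P := by
    refine IsCoprime.prod_right fun i _ => ?_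
    have := hcop.add_mul_right_right ((i : ℤ) - 1)
    simpa [mul_comm] using this
  obtain ⟨u, v, huv⟩ := hdP
  refine ⟨(d - a) * u, fun i h1 h2 => ?_⟩
  have hmP : (a + ((i : ℤ) - 1) * d) ∣ P :=
    Finset.dvd_prod_of_mem _ (Finset.mem_Icc.mpr ⟨h1, h2⟩)
  have hcop_i : IsCoprime (a + ((i : ℤ) - 1) * d) d := by
    have := hcop.symm.add_mul_right_left ((i : ℤ) - 1)
    simpa [mul_comm] using this
  refine hcop_i.dvd_of_dvd_mul_left ?_
  have hkey : d * ((d - a) * u - (i : ℤ))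
      = -(a + ((i : ℤ) - 1) * d) - (d - a) * v * P := by
    linear_combination (d - a) * huv
  rw [hkey]
  exact dvd_sub (dvd_neg.mpr dvd_rfl) (Dvd.dvd.mul_left hmP _)
end

section
/- There exist infinitely many pairs (a, d) of coprime positive integers such that all three terms a, a+d, a+2d of the arithmetic progression are perfect squares; that is, the set of pairs (a,d) of coprime positive integers for which a, a+d and a+2d are each a square of an integer is infinite. -/
/-- There are infinitely many pairs `(a, d)` of coprime positive integers such that
`a`, `a + d` and `a + 2d` are all perfect squares. -/
theorem infinite_square_ap_pairs :
    {p : ℤ × ℤ | 0 < p.1 ∧ 0 < p.2 ∧ Int.gcd p.1 p.2 = 1 ∧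
      (∃ t : ℤ, p.1 = t ^ 2) ∧ (∃ t : ℤ, p.1 + p.2 = t ^ 2) ∧
      (∃ t : ℤ, p.1 + 2 * p.2 = t ^ 2)}.Infinite := by
  apply Set.infinite_of_injective_forall_mem
    (f := fun k : ℕ => (((4 * (k:ℤ)^2 + 12 * k + 7)) ^ 2,
      ((4 * (k:ℤ)^2 + 16 * k + 17)) ^ 2 - ((4 * (k:ℤ)^2 + 12 * k + 7)) ^ 2))
  · intro a b hab
    have h1 : ((4 * (a:ℤ)^2 + 12 * a + 7)) ^ 2 = ((4 * (b:ℤ)^2 + 12 * b + 7)) ^ 2 :=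
      congrArg Prod.fst hab
    have ha : (0:ℤ) ≤ (a:ℤ) := Int.natCast_nonneg a
    have hb : (0:ℤ) ≤ (b:ℤ) := Int.natCast_nonneg b
    have h2 : (4 * (a:ℤ)^2 + 12 * a + 7) = (4 * (b:ℤ)^2 + 12 * b + 7) := by
      nlinarith [sq_nonneg ((4 * (a:ℤ)^2 + 12 * a + 7) + (4 * (b:ℤ)^2 + 12 * b + 7)),
        sq_nonneg ((4 * (a:ℤ)^2 + 12 * a + 7) - (4 * (b:ℤ)^2 + 12 * b + 7))]
    have : (a:ℤ) = b := by nlinarith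
    exact_mod_cast this
  · intro k
    set p : ℤ := 4 * (k:ℤ)^2 + 12 * k + 7 with hp
    set q : ℤ := 4 * (k:ℤ)^2 + 16 * k + 17 with hq
    have hk : (0:ℤ) ≤ (k:ℤ) := Int.natCast_nonneg k
    have hp0 : 0 < p := by positivity
    have hq0 : 0 < q := by positivity
    have hpq : p < q := by simp [hp, hq]; linarith
    have hcop : IsCoprime p q := by
      refine ⟨(-1 + (k + 2) * (k + 1) * (2 * k + 3) : ℤ),
        ((k + 2) * (k + 1) * (-2 * (k:ℤ) - 1)), ?_⟩
      simp only [hp, hq]; ring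
    have hcop2 : IsCoprime (p ^ 2) (q ^ 2 - p ^ 2) := by
      have := (hcop.pow (m := 2) (n := 2))
      have h' := this.add_mul_left_right (-1)
      simpa [mul_comm, sub_eq_add_neg] using h'
    refine ⟨by positivity, ?_, ?_, ⟨p, rfl⟩, ⟨q, by ring⟩,
      ⟨4 * (k:ℤ)^2 + 20 * k + 23, by simp only [hp, hq]; ring⟩⟩
    · have : p ^ 2 < q ^ 2 := by nlinarith
      simpa using this
    · exact Int.isCoprime_iff_gcd_eq_one.mp hcop2
end
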